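/- Let (A, ‖·‖) be a non-unital normed algebra with regular norm ‖·‖. If A (identified with A ⊕ {0}) is a closed subspace of the unitization (A_e, ‖·‖_op), then 0 ∈ closure(convexHull(V_A(a))) for every a ∈ A. -/

import Mathlib

/-- The spatial numerical range of `a` in a normed algebra `A` with norm `q`:
`{φ(ax) : ‖x‖ = 1, ‖φ‖ = 1, φ(x) = 1}`. -/
def spatialNR {A : Type*} [NonUnitalNonAssocRing A] [Module ℂ A]
    (q : A → ℝ) (a : A) : Set ℂ :=
  {z | ∃ (x : A) (φ : A →ₗ[ℂ] ℂ),
    q x = 1 ∧ (∀ y : A, ‖φ y‖ ≤ q y) ∧ φ x = 1 ∧ φ (a * x) = z}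

/-- The operator norm on the unitization `A_e` induced by the norm of `A`:
`‖a + λ1‖_op = sup {‖ax + λx‖ : ‖x‖ ≤ 1}`. -/
noncomputable def opU {A : Type*} [NonUnitalNormedRing A] [NormedSpace ℂ A]
    [IsScalarTower ℂ A A] [SMulCommClass ℂ A A] (z : Unitization ℂ A) : ℝ :=
  sSup {r : ℝ | ∃ x : A, ‖x‖ ≤ 1 ∧ r = ‖z.snd * x + z.fst • x‖}

/-- If `(A, ‖·‖)` is a non-unital normed algebra with regular norm and `A` is closed in
the unitization `(A_e, ‖·‖_op)`, then `0 ∈ closure (convexHull (V_A a))` for all `a`. -/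
theorem zero_mem_numericalRange_of_closed
    (A : Type*) [NonUnitalNormedRing A] [NormedSpace ℂ A]
    [IsScalarTower ℂ A A] [SMulCommClass ℂ A A]
    (hA : ¬ ∃ e : A, ∀ x : A, e * x = x ∧ x * e = x)
    (hreg : ∀ a : A, ‖a‖ = sSup {r : ℝ | ∃ x : A, ‖x‖ ≤ 1 ∧ r = ‖a * x‖})
    (hclosed : ∀ z : Unitization ℂ A,
      (∀ ε > (0 : ℝ), ∃ a : A, opU (z - (a : Unitization ℂ A)) < ε) →
      ∃ a : A, z = (a : Unitization ℂ A)) :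
    ∀ a : A, (0 : ℂ) ∈ closure (convexHull ℝ (spatialNR (‖·‖) a)) := by
  intro a
  by_contra h0
  -- Step 1: Hahn-Banach separation gives `w : ℂ`, `c > 0` with
  -- `c ≤ (conj w * z).re` for all `z` in the spatial numerical range.
  obtain ⟨w, c, hc, hstate⟩ :
      ∃ w : ℂ, ∃ c : ℝ, 0 < c ∧ ∀ z ∈ spatialNR (‖·‖) a, c ≤ (starRingEnd ℂ w * z).re := by
    obtain ⟨f, u, hf0, hfS⟩ := geometric_hahn_banach_point_closed
      ((convex_convexHull ℝ _).closure) isClosed_closure h0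
    refine ⟨Complex.mk (f 1) (f Complex.I), u, by simpa using hf0, fun z hz => ?_⟩
    have hz' : z ∈ closure (convexHull ℝ (spatialNR (‖·‖) a)) :=
      subset_closure (subset_convexHull ℝ _ hz)
    have h1 := hfS z hz'
    have hrepr : f z = z.re * (f 1) + z.im * (f Complex.I) := by
      have h2 : z = z.re • (1:ℂ) + z.im • Complex.I := by
        simp [Complex.real_smul, mul_comm]
        rw [mul_comm]; exact (Complex.re_add_im z).symm
      nth_rewrite 1 [h2]
      rw [map_add, map_smul, map_smul]; simp
    have h3 : (starRingEnd ℂ (Complex.mk (f 1) (f Complex.I)) * z).re = f z := by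
      simp [Complex.mul_re, hrepr, Complex.conj_re, Complex.conj_im]
      ring
    rw [h3]; linarith
  set b : A := (starRingEnd ℂ w) • a with hb
  clear_value b
  -- Step 2: the key expansion estimate.
  have hexp : ∀ h : ℝ, 0 < h → ∀ x : A, (1 + h * c) * ‖x‖ ≤ ‖x + (h:ℂ) • (b * x)‖ := by
    intro h hh x
    rcases eq_or_ne x 0 with rfl | hx
    · simp
    · obtain ⟨u, hu⟩ : ∃ u : A, u = ((‖x‖ : ℂ))⁻¹ • x := ⟨_, rfl⟩
      have hxn : (‖x‖ : ℂ) ≠ 0 := by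
        simpa using norm_ne_zero_iff.mpr hx
      have hu0 : u ≠ 0 := hu ▸ smul_ne_zero (inv_ne_zero hxn) hx
      have hnu : ‖u‖ = 1 := by
        rw [hu, norm_smul, norm_inv]
        simp [norm_ne_zero_iff.mpr hx]
      obtain ⟨g, hg1, hgu⟩ := exists_dual_vector ℂ u (norm_ne_zero_iff.mpr hu0)
      have hgu1 : g u = 1 := by rw [hgu, hnu]; norm_num
      have hmem : g (a * u) ∈ spatialNR (‖·‖) a := by
        refine ⟨u, g.toLinearMap, hnu, fun y => ?_, hgu1, rfl⟩
        simpa [hg1] using g.le_opNorm y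
      have hre : c ≤ (starRingEnd ℂ w * g (a * u)).re := hstate _ hmem
      have hbgu : g (b * u) = starRingEnd ℂ w * g (a * u) := by
        rw [hb, smul_mul_assoc, map_smul, smul_eq_mul]
      -- lower bound on the normalized vector
      have hlow : 1 + h * c ≤ ‖u + (h:ℂ) • (b * u)‖ := by
        have h4 : g (u + (h:ℂ) • (b * u)) = 1 + (h:ℂ) * (starRingEnd ℂ w * g (a * u)) := by
          rw [map_add, hgu1, map_smul, hbgu, smul_eq_mul]
        have h5 : (g (u + (h:ℂ) • (b * u))).re = 1 + h * (starRingEnd ℂ w * g (a * u)).re := by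
          rw [h4]; simp [Complex.add_re, Complex.mul_re]
        have h6 : (g (u + (h:ℂ) • (b * u))).re ≤ ‖g (u + (h:ℂ) • (b * u))‖ :=
          Complex.re_le_norm _
        have h7 : ‖g (u + (h:ℂ) • (b * u))‖ ≤ ‖u + (h:ℂ) • (b * u)‖ := by
          simpa [hg1] using g.le_opNorm (u + (h:ℂ) • (b * u))
        have h8 : 1 + h * c ≤ 1 + h * (starRingEnd ℂ w * g (a * u)).re := by
          nlinarith
        linarith
      -- rescale
      have hxu : x = (‖x‖ : ℂ) • u := by
        rw [hu, smul_smul, mul_inv_cancel₀ hxn, one_smul]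
      have hsc : (‖x‖ : ℂ) • (u + (h:ℂ) • (b * u)) = x + (h:ℂ) • (b * x) := by
        rw [smul_add, smul_comm ((‖x‖:ℂ)) ((h:ℂ)) (b * u), ← mul_smul_comm, ← hxu]
      have hnn : ‖(‖x‖ : ℂ)‖ = ‖x‖ := by simp
      calc (1 + h * c) * ‖x‖ = ‖x‖ * (1 + h * c) := mul_comm _ _
        _ ≤ ‖x‖ * ‖u + (h:ℂ) • (b * u)‖ :=
            mul_le_mul_of_nonneg_left hlow (norm_nonneg x)
        _ = ‖x + (h:ℂ) • (b * x)‖ := by rw [← hsc, norm_smul, hnn]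
  -- Step 3: choose parameters
  set h : ℝ := (2 * (‖b‖ + 1))⁻¹ with hhdef
  have hbn : (0:ℝ) < ‖b‖ + 1 := by positivity
  have hh : 0 < h := by positivity
  have hhb : h * ‖b‖ ≤ 1 / 2 := by
    rw [hhdef]
    rw [div_eq_inv_mul, mul_inv, mul_assoc]
    gcongr
    rw [inv_mul_le_iff₀ hbn]
    linarith
  set β : A := (-(h:ℂ)) • b with hβdef
  have hβ : ‖β‖ ≤ 1 / 2 := by
    rw [hβdef, norm_smul]
    simpa [abs_of_pos hh] using hhb
  have hsm : ∀ t : A, (h:ℂ) • (b * t) = -(β * t) := by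
    intro t
    rw [hβdef, smul_mul_assoc, neg_smul, neg_neg]
  clear_value β
  -- powers of β
  set pw : ℕ → A := fun n => Nat.rec β (fun _ ih => β * ih) n with hpwdef
  have hpw0 : pw 0 = β := rfl
  have hpwS : ∀ n, pw (n + 1) = β * pw n := fun n => rfl
  have hpwnorm : ∀ n, ‖pw n‖ ≤ (1/2 : ℝ) ^ (n + 1) := by
    intro n
    induction n with
    | zero => rw [hpw0]; simpa using hβ
    | succ n ih =>
      rw [hpwS]
      calc ‖β * pw n‖ ≤ ‖β‖ * ‖pw n‖ := norm_mul_le _ _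
        _ ≤ (1/2) * (1/2) ^ (n+1) := by
            apply mul_le_mul hβ ih (norm_nonneg _) (by norm_num)
        _ = (1/2 : ℝ) ^ (n + 2) := by ring
  -- choose M
  clear_value pw
  obtain ⟨M, hM⟩ := exists_pow_lt_of_lt_one (mul_pos hh hc) (by norm_num : (1/2:ℝ) < 1)
  set e : A := ∑ k ∈ Finset.range (M + 1), pw k with hedef
  -- key algebraic identity
  have hβe : β + β * e = e + pw (M + 1) := by
    have h1 : β * e = ∑ k ∈ Finset.range (M + 1), pw (k + 1) := by
      rw [hedef, Finset.mul_sum]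
      exact Finset.sum_congr rfl fun k _ => (hpwS k).symm
    have h2 : ∑ k ∈ Finset.range (M + 2), pw k
        = ∑ k ∈ Finset.range (M + 1), pw (k + 1) + pw 0 :=
      Finset.sum_range_succ' pw (M + 1)
    have h3 : ∑ k ∈ Finset.range (M + 2), pw k = e + pw (M + 1) := by
      rw [hedef]; exact Finset.sum_range_succ pw (M + 1)
    rw [h1]
    rw [h3, hpw0] at h2
    rw [h2]
    abel
  clear_value e
  have hkey : ∀ y : A, (y + e * y) + (h:ℂ) • (b * (y + e * y)) = y - pw (M + 1) * y := by
    intro y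
    rw [hsm]
    have : β * (y + e * y) = (β + β * e) * y := by
      rw [mul_add, add_mul, mul_assoc]
    rw [this, hβe, add_mul]
    abel
  -- contraction bound
  set ρ : ℝ := (1 + (1/2 : ℝ) ^ (M + 2)) / (1 + h * c) with hρdef
  have hden : (0:ℝ) < 1 + h * c := by nlinarith
  have hρ0 : 0 ≤ ρ := by positivity
  have hρ1 : ρ < 1 := by
    rw [hρdef, div_lt_one hden]
    have : (1/2:ℝ) ^ (M + 2) ≤ (1/2:ℝ) ^ M := by
      apply pow_le_pow_of_le_one (by norm_num) (by norm_num)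
      omega
    linarith
  have hT : ∀ y : A, ‖y + e * y‖ ≤ ρ * ‖y‖ := by
    intro y
    have h1 := hexp h hh (y + e * y)
    rw [hkey y] at h1
    have h2 : ‖y - pw (M + 1) * y‖ ≤ (1 + (1/2:ℝ) ^ (M + 2)) * ‖y‖ := by
      calc ‖y - pw (M + 1) * y‖ ≤ ‖y‖ + ‖pw (M + 1) * y‖ := norm_sub_le _ _
        _ ≤ ‖y‖ + ‖pw (M + 1)‖ * ‖y‖ := by linarith [norm_mul_le (pw (M+1)) y]
        _ ≤ (1 + (1/2:ℝ) ^ (M + 2)) * ‖y‖ := by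
            have := hpwnorm (M + 1)
            nlinarith [norm_nonneg y]
    rw [hρdef, div_mul_eq_mul_div, le_div_iff₀ hden, mul_comm _ (1 + h * c)]
    linarith
  -- iterated contraction
  set cs : ℕ → A := fun n => Nat.rec e (fun _ cn => e + cn + e * cn) n with hcsdef
  have hcsS : ∀ n, cs (n + 1) = e + cs n + e * cs n := fun n => rfl
  have hcs0 : cs 0 = e := rfl
  have hcs : ∀ n (y : A), ‖y + cs n * y‖ ≤ ρ ^ (n + 1) * ‖y‖ := by
    intro n
    induction n with
    | zero => intro y; rw [hcs0]; simpa using hT y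
    | succ n ih =>
      intro y
      have hid : y + cs (n + 1) * y = (y + cs n * y) + e * (y + cs n * y) := by
        rw [hcsS n, add_mul, add_mul, mul_add, mul_assoc]
        abel
      rw [hid]
      calc ‖(y + cs n * y) + e * (y + cs n * y)‖ ≤ ρ * ‖y + cs n * y‖ := hT _
        _ ≤ ρ * (ρ ^ (n + 1) * ‖y‖) := mul_le_mul_of_nonneg_left (ih y) hρ0
        _ = ρ ^ (n + 2) * ‖y‖ := by ring
  -- Step 4: contradiction with closedness
  obtain ⟨a0, ha0⟩ := hclosed 1 (by
    intro ε hε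
    obtain ⟨n, hn⟩ := exists_pow_lt_of_lt_one hε hρ1
    refine ⟨-(cs n), ?_⟩
    have hfst : ((1 : Unitization ℂ A) - (↑(-(cs n)) : Unitization ℂ A)).fst = 1 := by
      rw [sub_eq_add_neg]; simp
    have hsnd : ((1 : Unitization ℂ A) - (↑(-(cs n)) : Unitization ℂ A)).snd = cs n := by
      rw [sub_eq_add_neg]; simp
    have hlt : opU ((1 : Unitization ℂ A) - (↑(-(cs n)) : Unitization ℂ A)) ≤ ρ ^ n := by
      apply Real.sSup_le
      · rintro r ⟨x, hx, rfl⟩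
        rw [hfst, hsnd, one_smul]
        calc ‖cs n * x + x‖ = ‖x + cs n * x‖ := by rw [add_comm]
          _ ≤ ρ ^ (n + 1) * ‖x‖ := hcs n x
          _ ≤ ρ ^ (n + 1) * 1 := by
              apply mul_le_mul_of_nonneg_left hx (by positivity)
          _ = ρ ^ n * ρ := by ring
          _ ≤ ρ ^ n * 1 := by
              apply mul_le_mul_of_nonneg_left hρ1.le (by positivity)
          _ = ρ ^ n := by ring
      · positivity
    exact lt_of_le_of_lt hlt hn)
  have : (1 : ℂ) = 0 := by
    simpa using congrArg (fun z : Unitization ℂ A => z.fst) ha0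
  exact one_ne_zero this
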